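/- Let m ≥ n ≥ 1 be integers and define r ∈ ℚ^m by r_i = (m−n−1)/2 for 1 ≤ i ≤ n and r_i = (m+n+1−2i)/2 for n < i ≤ m. If a permutation w ∈ S_m satisfies r_{w(i)} = r_i for all 1 ≤ i ≤ m, and w(i) ≤ i for all 1 ≤ i ≤ n, then w is the identity. -/
import Mathlib


/-- Step (ii) for `gl(m|n)`: if `w ∈ S_m` stabilizes the vector `r` of
`ρ`-coordinates (`r_i = (m−n−1)/2` for `i ≤ n`, `r_i = (m+n+1−2i)/2` for
`i > n`, written `1`-indexed; coordinates here are `0`-indexed) and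
`w(i) ≤ i` for all `i ≤ n`, then `w = 1`. -/
theorem gl_stabilizer_step (m n : ℕ) (hn : 1 ≤ n) (hmn : n ≤ m)
    (r : Fin m → ℚ)
    (hr : ∀ i : Fin m, r i =
      if (i : ℕ) < n then ((m : ℚ) - n - 1) / 2
      else ((m : ℚ) + n - 1 - 2 * (i : ℕ)) / 2)
    (w : Equiv.Perm (Fin m))
    (h1 : ∀ i, r (w i) = r i)
    (h2 : ∀ i : Fin m, (i : ℕ) < n → ((w i : Fin m) : ℕ) ≤ (i : ℕ)) :
    w = 1 := by
  have hA : ∀ K : ℕ, ∀ k : Fin m, (k : ℕ) ≤ K → (k : ℕ) < n → w k = k := by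
    intro K
    induction K with
    | zero =>
      intro k hk hkn
      have h := h2 k hkn
      exact Fin.ext (by omega)
    | succ K ih =>
      intro k hk hkn
      rcases Nat.lt_or_ge (k : ℕ) (K + 1) with h | h
      · exact ih k (by omega) hkn
      · have hwk := h2 k hkn
        rcases Nat.lt_or_ge ((w k : Fin m) : ℕ) (k : ℕ) with hlt | hge
        · have hfix : w (w k) = w k := ih (w k) (by omega) (by omega)
          have := w.injective hfix
          exact absurd (congrArg Fin.val this) (by omega)
        · exact Fin.ext (by omega)
  ext i
  simp only [Equiv.Perm.coe_one, id_eq]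
  rcases Nat.lt_or_ge (i : ℕ) n with hin | hin
  · exact congrArg Fin.val (hA (i : ℕ) i le_rfl hin)
  · have hwn : n ≤ ((w i : Fin m) : ℕ) := by
      by_contra hc
      push_neg at hc
      have hfix : w (w i) = w i := hA (w i : ℕ) (w i) le_rfl hc
      have := w.injective hfix
      have := congrArg Fin.val this
      omega
    have h := h1 i
    rw [hr i, hr (w i), if_neg (by omega), if_neg (by omega)] at h
    have : (((w i : Fin m) : ℕ) : ℚ) = ((i : ℕ) : ℚ) := by linarith
    exact_mod_cast this
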